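/- Let x be a random variable taking values in {0,1} and let u be a real random variable with E[exp(u) | x] almost surely finite and strictly positive, and let log Y = α₀ + ε₀·x + u for constants α₀, ε₀ ∈ ℝ. Define γ₀ = α₀ + log E[exp(u) | x = 0], γ₁ = ε₀ + log E[exp(u) | x = 1] − log E[exp(u) | x = 0], and η = exp(u) / E[exp(u) | x]. Then almost surely Y = exp(γ₀ + γ₁·x) · η and E[η | x] = 1; that is, with a single binary treatment the log-linear model and the exponential (PPML) model E[Y | x] = exp(γ₀ + γ₁·x) are exactly compatible, with parameters related by the stated mapping. -/

import Mathlib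

open MeasureTheory Real ProbabilityTheory

/-- compatibility of the log-linear and exponential models with a single
binary treatment. Let `x ∈ {0,1}`, `log Y = α₀ + ε₀ x + u`, and let
`c j = E[exp u | x = j]` be finite and strictly positive. With
`γ₀ = α₀ + log (c 0)`, `γ₁ = ε₀ + log (c 1) − log (c 0)`, and `η = exp u / c x`,
almost surely `Y = exp (γ₀ + γ₁ x) · η`, `E[η | x = j] = 1`, and
`E[Y | x = j] = exp (γ₀ + γ₁ j)` for `j ∈ {0,1}`. -/
theorem stmt19
    {Ω : Type*} [MeasurableSpace Ω] (μ : Measure Ω) [IsProbabilityMeasure μ]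
    (x u : Ω → ℝ) (hx : Measurable x) (hu : Measurable u)
    (hbin : ∀ ω, x ω = 0 ∨ x ω = 1)
    (h0 : μ (x ⁻¹' {0}) ≠ 0) (h1 : μ (x ⁻¹' {1}) ≠ 0)
    (hint : Integrable (fun ω => Real.exp (u ω)) μ)
    (α₀ ε₀ : ℝ)
    (c : ℝ → ℝ)
    (hc : ∀ j : ℝ, c j = ∫ ω, Real.exp (u ω) ∂(μ[|x ⁻¹' {j}]))
    (hc0pos : 0 < c 0) (hc1pos : 0 < c 1)
    (γ₀ γ₁ : ℝ)
    (hγ₀ : γ₀ = α₀ + Real.log (c 0))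
    (hγ₁ : γ₁ = ε₀ + Real.log (c 1) - Real.log (c 0)) :
    (∀ᵐ ω ∂μ, Real.exp (α₀ + ε₀ * x ω + u ω)
        = Real.exp (γ₀ + γ₁ * x ω) * (Real.exp (u ω) / c (x ω)))
    ∧ (∀ j : ℝ, j = 0 ∨ j = 1 →
        (∫ ω, Real.exp (u ω) / c (x ω) ∂(μ[|x ⁻¹' {j}])) = 1)
    ∧ (∀ j : ℝ, j = 0 ∨ j = 1 →
        (∫ ω, Real.exp (α₀ + ε₀ * x ω + u ω) ∂(μ[|x ⁻¹' {j}]))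
          = Real.exp (γ₀ + γ₁ * j)) := by
  -- pointwise identity for points with x ω = j, j ∈ {0,1}
  have hpt : ∀ ω, Real.exp (α₀ + ε₀ * x ω + u ω)
      = Real.exp (γ₀ + γ₁ * x ω) * (Real.exp (u ω) / c (x ω)) := by
    intro ω
    rcases hbin ω with h | h <;> rw [h] <;>
      simp only [mul_zero, mul_one, add_zero] <;>
      rw [hγ₀]
    · rw [Real.exp_add, Real.exp_add (α₀) (Real.log (c 0)), Real.exp_log hc0pos]
      field_simp [ne_of_gt hc0pos, Real.exp_add]
    · rw [hγ₁]
      have : α₀ + Real.log (c 0) + (ε₀ + Real.log (c 1) - Real.log (c 0))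
          = α₀ + ε₀ + Real.log (c 1) := by ring
      rw [this, show Real.exp (α₀ + ε₀ + Real.log (c 1))
          = Real.exp α₀ * Real.exp ε₀ * c 1 by
        rw [Real.exp_add, Real.exp_add, Real.exp_log hc1pos]]
      field_simp [ne_of_gt hc1pos]
      rw [Real.exp_add, Real.exp_add]
  have hxj : ∀ j : ℝ, MeasurableSet (x ⁻¹' {j}) :=
    fun j => hx (measurableSet_singleton j)
  have haej : ∀ j : ℝ, ∀ᵐ ω ∂(μ[|x ⁻¹' {j}]), x ω = j := by
    intro j
    rw [ProbabilityTheory.cond]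
    exact Measure.ae_smul_measure (ae_restrict_mem (hxj j)) _
  have hη : ∀ j : ℝ, j = 0 ∨ j = 1 →
      (∫ ω, Real.exp (u ω) / c (x ω) ∂(μ[|x ⁻¹' {j}])) = 1 := by
    intro j hj
    have hcjpos : 0 < c j := by rcases hj with rfl | rfl <;> assumption
    have : (∫ ω, Real.exp (u ω) / c (x ω) ∂(μ[|x ⁻¹' {j}]))
        = ∫ ω, Real.exp (u ω) / c j ∂(μ[|x ⁻¹' {j}]) := by
      refine integral_congr_ae ?_
      filter_upwards [haej j] with ω hω
      rw [hω]
    rw [this, integral_div, ← hc j, div_self (ne_of_gt hcjpos)]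
  refine ⟨Filter.Eventually.of_forall hpt, hη, ?_⟩
  intro j hj
  have hcjpos : 0 < c j := by rcases hj with rfl | rfl <;> assumption
  have : (∫ ω, Real.exp (α₀ + ε₀ * x ω + u ω) ∂(μ[|x ⁻¹' {j}]))
      = ∫ ω, Real.exp (γ₀ + γ₁ * j) * (Real.exp (u ω) / c (x ω)) ∂(μ[|x ⁻¹' {j}]) := by
    refine integral_congr_ae ?_
    filter_upwards [haej j] with ω hω
    rw [hpt ω, hω]
  rw [this, integral_const_mul, hη j hj, mul_one]
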